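/- In the setting of the previous convergence lemma, assume in addition that each χ_i lies in the cone ℝ_{≥0}{λ_j : j ∈ J}. Then for every choice of real numbers σ_i > −c (i ∈ I), the integral ∫_C exp(−f(x) − N ∑_{j∈J} max(0,−λ_j(x)) − ∑_{i∈I} σ_i χ_i(x)) dx converges for all sufficiently large N (depending on max_i σ_i). -/

import Mathlib

open MeasureTheory

section Aux

variable {W : Type*} [NormedAddCommGroup W] [NormedSpace ℝ W] [FiniteDimensional ℝ W]
  [MeasurableSpace W] [BorelSpace W]

/-- `exp (-(a * ‖x‖))` is integrable w.r.t. a Haar measure on a finite-dimensional space. -/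
lemma aux_integrable_exp_neg_mul_norm (μ : Measure W) [μ.IsAddHaarMeasure] {a : ℝ}
    (ha : 0 < a) : Integrable (fun x : W => Real.exp (-(a * ‖x‖))) μ := by
  set n : ℕ := Module.finrank ℝ W + 1 with hn
  have hnpos : (0 : ℝ) < n := by positivity
  set ε : ℝ := min 1 (a / n) with hε
  have hε0 : 0 < ε := lt_min one_pos (by positivity)
  have hε1 : ε ≤ 1 := min_le_left _ _
  have hna : (n : ℝ) * ε ≤ a := by
    have : ε ≤ a / n := min_le_right _ _
    calc (n : ℝ) * ε ≤ (n : ℝ) * (a / n) := by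
          exact mul_le_mul_of_nonneg_left this (by positivity)
      _ = a := by field_simp
  have hint : Integrable (fun x : W => (1 + ‖x‖) ^ (-(n : ℝ))) μ :=
    integrable_one_add_norm (by exact_mod_cast Nat.lt_succ_self _)
  refine (hint.const_mul (ε⁻¹ ^ n)).mono' ?_ (Filter.Eventually.of_forall fun x => ?_)
  · exact (Real.continuous_exp.comp ((continuous_const.mul continuous_norm).neg)).aestronglyMeasurable
  · have ht0 : (0 : ℝ) ≤ ‖x‖ := norm_nonneg x
    set t : ℝ := ‖x‖ with htdef
    rw [Real.norm_eq_abs, abs_of_pos (Real.exp_pos _)]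
    -- key : (1+t)^n ≤ ε⁻ⁿ * exp (a t)
    have h1 : 1 + t ≤ ε⁻¹ * Real.exp (ε * t) := by
      have h2 : ε * (1 + t) ≤ 1 + ε * t := by nlinarith
      have h3 : 1 + ε * t ≤ Real.exp (ε * t) := by
        have := Real.add_one_le_exp (ε * t); linarith
      rw [← mul_le_mul_iff_right₀ hε0, ← mul_assoc, mul_inv_cancel₀ hε0.ne', one_mul]
      exact h2.trans h3
    have h4 : (1 + t) ^ n ≤ (ε⁻¹ * Real.exp (ε * t)) ^ n :=
      pow_le_pow_left₀ (by linarith) h1 n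
    have h5 : (ε⁻¹ * Real.exp (ε * t)) ^ n = ε⁻¹ ^ n * Real.exp ((n : ℝ) * (ε * t)) := by
      rw [mul_pow, ← Real.exp_nat_mul]
    have h6 : Real.exp ((n : ℝ) * (ε * t)) ≤ Real.exp (a * t) := by
      rw [Real.exp_le_exp, ← mul_assoc]
      exact mul_le_mul_of_nonneg_right hna ht0
    have h7 : (1 + t) ^ n ≤ ε⁻¹ ^ n * Real.exp (a * t) := by
      calc (1 + t) ^ n ≤ ε⁻¹ ^ n * Real.exp ((n : ℝ) * (ε * t)) := by rw [← h5]; exact h4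
        _ ≤ ε⁻¹ ^ n * Real.exp (a * t) :=
          mul_le_mul_of_nonneg_left h6 (by positivity)
    have h8 : (1 + t) ^ (-(n : ℝ)) = ((1 + t) ^ n)⁻¹ := by
      rw [Real.rpow_neg (by linarith), Real.rpow_natCast]
    have h10 : ε ^ n * (1 + t) ^ n ≤ Real.exp (a * t) := by
      have h11 := mul_le_mul_of_nonneg_left h7 (le_of_lt (pow_pos hε0 n))
      calc ε ^ n * (1 + t) ^ n ≤ ε ^ n * (ε⁻¹ ^ n * Real.exp (a * t)) := h11
        _ = (ε * ε⁻¹) ^ n * Real.exp (a * t) := by rw [mul_pow]; ring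
        _ = Real.exp (a * t) := by rw [mul_inv_cancel₀ hε0.ne', one_pow, one_mul]
    rw [h8]
    calc Real.exp (-(a * t)) = (Real.exp (a * t))⁻¹ := Real.exp_neg _
      _ ≤ (ε ^ n * (1 + t) ^ n)⁻¹ := by
          apply inv_anti₀ (by positivity) h10
      _ = ε⁻¹ ^ n * ((1 + t) ^ n)⁻¹ := by rw [mul_inv, inv_pow]

/-- Pointwise sign lemma. -/
lemma aux_sign (c σ t u : ℝ) (hc : 0 < c) (hσ : -c < σ) (hu1 : 0 ≤ u)
    (hu2 : max 0 (-t) ≤ u) : -c * max 0 t - max σ 0 * u ≤ σ * t := by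
  have hmax : 0 ≤ max σ 0 := le_max_right _ _
  rcases le_total 0 t with h | h
  · rw [max_eq_right h]
    nlinarith
  · rw [max_eq_left h]
    have ht : -t ≤ u := (le_max_right 0 (-t)).trans hu2
    rcases le_total σ 0 with hs | hs
    · rw [max_eq_right hs]; nlinarith
    · rw [max_eq_left hs]; nlinarith

end Aux

/-- In the setting of the convergence lemma (closed polyhedral cone `C`, continuous
positively 1-homogeneous `f` strictly positive on `{x ∈ C : lam j x ≥ 0 ∀ j} \ {0}`),
assume in addition that each `chi i` lies in the cone `ℝ_{≥0}{lam j : j ∈ J}`.  Then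
there is `c > 0` such that for every choice of real numbers `σ i > −c`, the integral
`∫_C exp (−f x − N ∑_j max 0 (−lam j x) − ∑_i σ i * chi i x) dx`
converges for all sufficiently large `N` (depending on `σ`). -/
theorem convergence_lemma_polyhedral_cone_coeffs {W : Type*} [NormedAddCommGroup W]
    [NormedSpace ℝ W] [FiniteDimensional ℝ W] [MeasurableSpace W] [BorelSpace W]
    (μ : Measure W) [μ.IsAddHaarMeasure]
    {I J K : Type*} [Fintype I] [Fintype J] [Fintype K]
    (chi : I → (W →ₗ[ℝ] ℝ)) (lam : J → (W →ₗ[ℝ] ℝ))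
    (f : W → ℝ) (hf : Continuous f)
    (hhom : ∀ r : ℝ, 0 < r → ∀ v : W, f (r • v) = r * f v)
    (g : K → (W →ₗ[ℝ] ℝ)) (C : Set W) (hC : C = {x : W | ∀ k, 0 ≤ g k x})
    (hpos : ∀ x ∈ C, (∀ j, 0 ≤ lam j x) → x ≠ 0 → 0 < f x)
    (hchi : ∀ i, ∃ d : J → ℝ, (∀ j, 0 ≤ d j) ∧ chi i = ∑ j, d j • lam j) :
    ∃ c : ℝ, 0 < c ∧ ∀ σ : I → ℝ, (∀ i, -c < σ i) →
      ∃ N₀ : ℝ, ∀ N : ℝ, N₀ ≤ N →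
        IntegrableOn
          (fun x => Real.exp (-f x - N * ∑ j, max 0 (-(lam j x)) - ∑ i, σ i * chi i x))
          C μ := by
  classical
  choose d hd0 hdeq using hchi
  set φ : W → ℝ := fun x => ∑ j, max 0 (-(lam j x)) with hφdef
  set ψ : W → ℝ := fun x => ∑ i, max 0 (chi i x) with hψdef
  have hlamc : ∀ j, Continuous fun x : W => lam j x :=
    fun j => (lam j).continuous_of_finiteDimensional
  have hchic : ∀ i, Continuous fun x : W => chi i x :=
    fun i => (chi i).continuous_of_finiteDimensional
  have hφc : Continuous φ :=
    continuous_finset_sum _ fun j _ => continuous_const.max (hlamc j).neg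
  have hψc : Continuous ψ :=
    continuous_finset_sum _ fun i _ => continuous_const.max (hchic i)
  have hφ0 : ∀ x, 0 ≤ φ x := fun x =>
    Finset.sum_nonneg fun j _ => le_max_left _ _
  have hψ0 : ∀ x, 0 ≤ ψ x := fun x =>
    Finset.sum_nonneg fun i _ => le_max_left _ _
  have hCclosed : IsClosed C := by
    rw [hC]
    have : {x : W | ∀ k, 0 ≤ g k x} = ⋂ k, {x : W | 0 ≤ g k x} := by
      ext x; simp
    rw [this]
    exact isClosed_iInter fun k => isClosed_le continuous_const (g k).continuous_of_finiteDimensional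
  have hcone : ∀ x ∈ C, ∀ r : ℝ, 0 ≤ r → r • x ∈ C := by
    intro x hx r hr
    rw [hC] at hx ⊢
    intro k
    rw [_root_.map_smul, smul_eq_mul]
    exact mul_nonneg hr (hx k)
  set S : Set W := Metric.sphere (0 : W) 1 ∩ C with hSdef
  have hS : IsCompact S := (isCompact_sphere 0 1).inter_right hCclosed
  -- Step A : ∃ N₁ δ, 0 < δ, ∀ x ∈ S, δ ≤ f x + N₁ * φ x
  obtain ⟨N₁, δ, hδ, hA⟩ :
      ∃ (N₁ δ : ℝ), 0 < δ ∧ ∀ x ∈ S, δ ≤ f x + N₁ * φ x := by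
    set U : ℕ → Set W := fun n => {x : W | 0 < f x + (n : ℝ) * φ x} with hUdef
    have hUopen : ∀ n, IsOpen (U n) :=
      fun n => isOpen_lt continuous_const (hf.add (continuous_const.mul hφc))
    have hcover : S ⊆ ⋃ n, U n := by
      intro x hx
      rcases hx with ⟨hx1, hx2⟩
      have hxne : x ≠ 0 := by
        intro h
        rw [h] at hx1
        simp [Metric.mem_sphere] at hx1
      rcases eq_or_lt_of_le (hφ0 x) with h0 | h0
      · -- φ x = 0 : all λ_j nonneg
        have hlam : ∀ j, 0 ≤ lam j x := by
          intro j
          have : ∀ j' ∈ Finset.univ, (0:ℝ) ≤ max 0 (-(lam j' x)) :=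
            fun j' _ => le_max_left _ _
          have hz : max 0 (-(lam j x)) = 0 := by
            have := (Finset.sum_eq_zero_iff_of_nonneg this).1 h0.symm j (Finset.mem_univ j)
            exact this
          have := le_max_right (0:ℝ) (-(lam j x))
          rw [hz] at this
          linarith
        have := hpos x hx2 hlam hxne
        refine Set.mem_iUnion.2 ⟨0, ?_⟩
        simp only [U, Set.mem_setOf_eq, Nat.cast_zero, zero_mul, add_zero]
        exact this
      · obtain ⟨n, hn⟩ := exists_nat_gt ((-f x) / φ x)
        refine Set.mem_iUnion.2 ⟨n, ?_⟩
        have : -f x < (n : ℝ) * φ x := by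
          rw [div_lt_iff₀ h0] at hn
          linarith
        simp only [U, Set.mem_setOf_eq]
        linarith
    obtain ⟨t, ht⟩ := hS.elim_finite_subcover U hUopen hcover
    set n₀ : ℕ := t.sup id with hn₀
    have hposS : ∀ x ∈ S, 0 < f x + (n₀ : ℝ) * φ x := by
      intro x hx
      obtain ⟨n, hnt, hxn⟩ := Set.mem_iUnion₂.1 (ht hx)
      have hn' : (n : ℝ) ≤ (n₀ : ℝ) := by
        exact_mod_cast Finset.le_sup (f := id) hnt
      have : 0 < f x + (n : ℝ) * φ x := hxn
      have := mul_le_mul_of_nonneg_right hn' (hφ0 x)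
      linarith
    rcases Set.eq_empty_or_nonempty S with hSe | hSne
    · exact ⟨(n₀ : ℝ), 1, one_pos, fun x hx => absurd (hSe ▸ hx) (Set.notMem_empty x)⟩
    · obtain ⟨x₀, hx₀S, hx₀min⟩ :=
        hS.exists_isMinOn hSne ((hf.add (continuous_const.mul hφc)).continuousOn)
      exact ⟨(n₀ : ℝ), f x₀ + (n₀ : ℝ) * φ x₀, hposS x₀ hx₀S,
        fun x hx => hx₀min hx⟩
  -- bound for ψ on S
  obtain ⟨B, hB⟩ := hS.exists_bound_of_continuousOn hψc.continuousOn
  set B' : ℝ := max B 1 with hB'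
  have hB'pos : (0 : ℝ) < B' := lt_of_lt_of_le one_pos (le_max_right _ _)
  set c : ℝ := δ / (2 * B') with hc
  have hcpos : 0 < c := by positivity
  refine ⟨c, hcpos, ?_⟩
  intro σ hσ
  set E : ℝ := ∑ i, max (σ i) 0 * (∑ j, d i j) with hE
  have hE0 : 0 ≤ E :=
    Finset.sum_nonneg fun i _ => mul_nonneg (le_max_right _ _)
      (Finset.sum_nonneg fun j _ => hd0 i j)
  refine ⟨N₁ + E, ?_⟩
  intro N hN
  -- the lower bound function F
  set F : W → ℝ := fun x => f x + N₁ * φ x - c * ψ x with hFdef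
  -- key per-point inequality for the χ sum
  have hχbound : ∀ (i : I) (x : W), max 0 (-(chi i x)) ≤ (∑ j, d i j) * φ x := by
    intro i x
    have hχ : chi i x = ∑ j, d i j * lam j x := by
      rw [hdeq i]
      simp [LinearMap.sum_apply, LinearMap.smul_apply, smul_eq_mul]
    have h1 : -(chi i x) ≤ ∑ j, d i j * max 0 (-(lam j x)) := by
      rw [hχ, ← Finset.sum_neg_distrib]
      refine Finset.sum_le_sum fun j _ => ?_
      rw [← mul_neg]
      exact mul_le_mul_of_nonneg_left (le_max_right _ _) (hd0 i j)
    have h2 : ∑ j, d i j * max 0 (-(lam j x)) ≤ (∑ j, d i j) * φ x := by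
      rw [hφdef, Finset.mul_sum]
      refine Finset.sum_le_sum fun j _ => ?_
      exact mul_le_mul_of_nonneg_right
        (Finset.single_le_sum (fun j' _ => hd0 i j') (Finset.mem_univ j))
        (le_max_left _ _)
    exact max_le (mul_nonneg (Finset.sum_nonneg fun j _ => hd0 i j) (hφ0 x)) (h1.trans h2)
  have hL : ∀ x : W, -c * ψ x - E * φ x ≤ ∑ i, σ i * chi i x := by
    intro x
    have h1 : ∀ i ∈ Finset.univ,
        -c * max 0 (chi i x) - max (σ i) 0 * ((∑ j, d i j) * φ x) ≤ σ i * chi i x := by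
      intro i _
      exact aux_sign c (σ i) (chi i x) ((∑ j, d i j) * φ x) hcpos (hσ i)
        (mul_nonneg (Finset.sum_nonneg fun j _ => hd0 i j) (hφ0 x)) (hχbound i x)
    have h2 := Finset.sum_le_sum h1
    have h3 : ∑ i, (-c * max 0 (chi i x) - max (σ i) 0 * ((∑ j, d i j) * φ x))
        = -c * ψ x - E * φ x := by
      rw [Finset.sum_sub_distrib, ← Finset.mul_sum, hψdef, hE, Finset.sum_mul]
      congr 1
      refine Finset.sum_congr rfl fun i _ => ?_
      ring
    rw [h3] at h2
    exact h2
  -- homogeneity of F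
  have hf0 : f 0 = 0 := by
    have := hhom 2 two_pos 0
    rw [smul_zero] at this
    linarith
  have hφhom : ∀ (r : ℝ), 0 ≤ r → ∀ x, φ (r • x) = r * φ x := by
    intro r hr x
    rw [hφdef, Finset.mul_sum]
    refine Finset.sum_congr rfl fun j _ => ?_
    rw [_root_.map_smul, smul_eq_mul, ← mul_neg, mul_max_of_nonneg _ _ hr, mul_zero]
  have hψhom : ∀ (r : ℝ), 0 ≤ r → ∀ x, ψ (r • x) = r * ψ x := by
    intro r hr x
    rw [hψdef, Finset.mul_sum]
    refine Finset.sum_congr rfl fun i _ => ?_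
    rw [_root_.map_smul, smul_eq_mul, mul_max_of_nonneg _ _ hr, mul_zero]
  have hFS : ∀ x ∈ S, δ / 2 ≤ F x := by
    intro x hx
    have h1 := hA x hx
    have h2 : ψ x ≤ B' := by
      have := hB x hx
      have := le_abs_self (ψ x)
      rw [Real.norm_eq_abs] at *
      calc ψ x ≤ |ψ x| := le_abs_self _
        _ ≤ B := hB x hx
        _ ≤ B' := le_max_left _ _
    have h3 : c * ψ x ≤ δ / 2 := by
      have := mul_le_mul_of_nonneg_left h2 hcpos.le
      have hcB : c * B' = δ / 2 := by
        rw [hc]; field_simp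
      linarith
    simp only [hFdef]
    linarith
  have hFC : ∀ x ∈ C, δ / 2 * ‖x‖ ≤ F x := by
    intro x hx
    rcases eq_or_ne x 0 with h0 | h0
    · subst h0
      have hφz : φ (0 : W) = 0 := by
        simp [hφdef]
      have hψz : ψ (0 : W) = 0 := by
        simp [hψdef]
      simp [hFdef, hf0, hφz, hψz]
    · have hnx : 0 < ‖x‖ := norm_pos_iff.2 h0
      set y : W := ‖x‖⁻¹ • x with hy
      have hyS : y ∈ S := by
        constructor
        · rw [mem_sphere_zero_iff_norm, hy, norm_smul, norm_inv, norm_norm,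
            inv_mul_cancel₀ hnx.ne']
        · exact hcone x hx _ (by positivity)
      have hxy : ‖x‖ • y = x := by
        rw [hy, smul_smul, mul_inv_cancel₀ hnx.ne', one_smul]
      have hFy : F (‖x‖ • y) = ‖x‖ * F y := by
        simp only [hFdef]
        rw [hhom _ hnx, hφhom _ hnx.le, hψhom _ hnx.le]
        ring
      have hFx : F x = ‖x‖ * F y := (congrArg F hxy).symm.trans hFy
      rw [hFx]
      rw [mul_comm (δ / 2) ‖x‖]
      exact mul_le_mul_of_nonneg_left (hFS y hyS) hnx.le
  -- final : comparison with integrable majorant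
  have hmeasC : MeasurableSet C := hCclosed.measurableSet
  have hmaj : Integrable (fun x : W => Real.exp (-(δ / 2 * ‖x‖))) μ :=
    aux_integrable_exp_neg_mul_norm μ (by positivity)
  refine (hmaj.restrict (s := C)).mono' ?_ ?_
  · refine Continuous.aestronglyMeasurable ?_
    exact Real.continuous_exp.comp
      (((hf.neg.sub (continuous_const.mul hφc)).sub
        (continuous_finset_sum _ fun i _ => continuous_const.mul (hchic i))))
  · rw [Filter.eventually_iff_exists_mem]
    refine ⟨C, self_mem_ae_restrict hmeasC, fun x hx => ?_⟩
    rw [Real.norm_eq_abs, abs_of_pos (Real.exp_pos _), Real.exp_le_exp]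
    have h1 := hFC x hx
    have h2 := hL x
    have h3 : (N₁ + E) * φ x ≤ N * φ x := mul_le_mul_of_nonneg_right hN (hφ0 x)
    simp only [hFdef] at h1
    have hφx : φ x = ∑ j, max 0 (-(lam j x)) := rfl
    rw [← hφx]
    nlinarith [hφ0 x]
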